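/- arXiv:2006.16785 — 4 statements merged into one kernel-verified Lean document; each statement's English description precedes it below -/
import Mathlib

section
/- Under the assumptions of the previous setup (f A-Lipschitz, μ B-Lipschitz, r δ-Lipschitz, F(s,a)=(f(s,a),μ(f(s,a))), C = A·max(1,B)), let γ ∈ [0,1) and T a natural number. Then the finite-horizon value function Q_T(s,a) := Σ_{k=0}^{T-1} γ^k · r(F^[k](s,a)) is Lipschitz with constant δ · Σ_{k=0}^{T-1} (γC)^k. -/
theorem stmt2 {X Y : Type*} [MetricSpace X] [MetricSpace Y]
    (A B δ γ : ℝ) (hA : 0 ≤ A) (hB : 0 ≤ B) (hδ : 0 ≤ δ)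
    (hγ0 : 0 ≤ γ) (hγ1 : γ < 1)
    (f : X × Y → X) (μ : X → Y) (r : X × Y → ℝ)
    (hf : ∀ p q : X × Y, dist (f p) (f q) ≤ A * dist p q)
    (hμ : ∀ s t : X, dist (μ s) (μ t) ≤ B * dist s t)
    (hr : ∀ p q : X × Y, dist (r p) (r q) ≤ δ * dist p q)
    (F : X × Y → X × Y) (hF : ∀ p, F p = (f p, μ (f p)))
    (C : ℝ) (hC : C = A * max 1 B) (T : ℕ) :
    ∀ p q : X × Y,
      dist (∑ k ∈ Finset.range T, γ ^ k * r (F^[k] p))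
           (∑ k ∈ Finset.range T, γ ^ k * r (F^[k] q))
        ≤ (δ * ∑ k ∈ Finset.range T, (γ * C) ^ k) * dist p q := by
  have hC0 : 0 ≤ C := by
    rw [hC]; exact mul_nonneg hA (le_trans zero_le_one (le_max_left _ _))
  have hFlip : ∀ p q : X × Y, dist (F p) (F q) ≤ C * dist p q := by
    intro p q
    rw [hF p, hF q, Prod.dist_eq]
    have h1 : dist (f p) (f q) ≤ C * dist p q := by
      calc dist (f p) (f q) ≤ A * dist p q := hf p q
        _ ≤ C * dist p q := by
          apply mul_le_mul_of_nonneg_right _ dist_nonneg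
          rw [hC]
          nlinarith [le_max_left (1:ℝ) B]
    have h2 : dist (μ (f p)) (μ (f q)) ≤ C * dist p q := by
      calc dist (μ (f p)) (μ (f q)) ≤ B * dist (f p) (f q) := hμ _ _
        _ ≤ B * (A * dist p q) := mul_le_mul_of_nonneg_left (hf p q) hB
        _ = A * B * dist p q := by ring
        _ ≤ C * dist p q := by
          rw [hC]
          have : A * B ≤ A * max 1 B := mul_le_mul_of_nonneg_left (le_max_right _ _) hA
          exact mul_le_mul_of_nonneg_right this dist_nonneg
    exact max_le h1 h2
  have hiter : ∀ (k : ℕ) (p q : X × Y), dist (F^[k] p) (F^[k] q) ≤ C ^ k * dist p q := by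
    intro k
    induction k with
    | zero => intro p q; simp
    | succ n ih =>
      intro p q
      simp only [Function.iterate_succ_apply']
      calc dist (F (F^[n] p)) (F (F^[n] q)) ≤ C * dist (F^[n] p) (F^[n] q) := hFlip _ _
        _ ≤ C * (C ^ n * dist p q) := mul_le_mul_of_nonneg_left (ih p q) hC0
        _ = C ^ (n + 1) * dist p q := by ring
  intro p q
  calc dist (∑ k ∈ Finset.range T, γ ^ k * r (F^[k] p))
           (∑ k ∈ Finset.range T, γ ^ k * r (F^[k] q))
      ≤ ∑ k ∈ Finset.range T, δ * (γ * C) ^ k * dist p q := by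
        apply dist_sum_sum_le_of_le
        intro k _
        rw [Real.dist_eq, ← mul_sub, abs_mul, abs_pow, abs_of_nonneg hγ0, ← Real.dist_eq]
        calc γ ^ k * dist (r (F^[k] p)) (r (F^[k] q))
            ≤ γ ^ k * (δ * (C ^ k * dist p q)) := by
              apply mul_le_mul_of_nonneg_left _ (pow_nonneg hγ0 k)
              exact le_trans (hr _ _) (mul_le_mul_of_nonneg_left (hiter k p q) hδ)
          _ = δ * (γ * C) ^ k * dist p q := by rw [mul_pow]; ring
    _ = (δ * ∑ k ∈ Finset.range T, (γ * C) ^ k) * dist p q := by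
        rw [Finset.mul_sum, Finset.sum_mul]
end

section
/- Under the same assumptions (f A-Lipschitz, μ B-Lipschitz, r δ-Lipschitz, C = A·max(1,B), γ ∈ [0,1)), if additionally γ·C ≠ 1, then the finite-horizon value Q_T(s,a) = Σ_{k=0}^{T-1} γ^k r(F^[k](s,a)) is Lipschitz with constant δ · (1 - (γC)^T) / (1 - γC). -/
theorem stmt3 {X Y : Type*} [MetricSpace X] [MetricSpace Y]
    (A B δ γ : ℝ) (hA : 0 ≤ A) (hB : 0 ≤ B) (hδ : 0 ≤ δ)
    (hγ0 : 0 ≤ γ) (hγ1 : γ < 1)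
    (f : X × Y → X) (μ : X → Y) (r : X × Y → ℝ)
    (hf : ∀ p q : X × Y, dist (f p) (f q) ≤ A * dist p q)
    (hμ : ∀ s t : X, dist (μ s) (μ t) ≤ B * dist s t)
    (hr : ∀ p q : X × Y, dist (r p) (r q) ≤ δ * dist p q)
    (F : X × Y → X × Y) (hF : ∀ p, F p = (f p, μ (f p)))
    (C : ℝ) (hC : C = A * max 1 B) (hne : γ * C ≠ 1) (T : ℕ) :
    ∀ p q : X × Y,
      dist (∑ k ∈ Finset.range T, γ ^ k * r (F^[k] p))
           (∑ k ∈ Finset.range T, γ ^ k * r (F^[k] q))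
        ≤ (δ * (1 - (γ * C) ^ T) / (1 - γ * C)) * dist p q := by
  intro p q
  have hC0 : 0 ≤ C := by
    rw [hC]; exact mul_nonneg hA (le_trans zero_le_one (le_max_left _ _))
  have hFC : ∀ p q : X × Y, dist (F p) (F q) ≤ C * dist p q := by
    intro p q
    rw [hF, hF, Prod.dist_eq, hC]
    apply max_le
    · calc dist (f p) (f q) ≤ A * dist p q := hf p q
        _ ≤ A * max 1 B * dist p q := by
          apply mul_le_mul_of_nonneg_right _ dist_nonneg
          nlinarith [le_max_left (1:ℝ) B]
    · calc dist (μ (f p)) (μ (f q)) ≤ B * dist (f p) (f q) := hμ _ _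
        _ ≤ B * (A * dist p q) :=
          mul_le_mul_of_nonneg_left (hf p q) hB
        _ ≤ A * max 1 B * dist p q := by
          nlinarith [mul_nonneg (mul_nonneg hA (dist_nonneg (x := p) (y := q))) (sub_nonneg.mpr (le_max_right (1:ℝ) B))]
  have hiter : ∀ k : ℕ, dist (F^[k] p) (F^[k] q) ≤ C ^ k * dist p q := by
    intro k
    induction k with
    | zero => simp
    | succ n ih =>
      rw [Function.iterate_succ_apply', Function.iterate_succ_apply']
      calc dist (F (F^[n] p)) (F (F^[n] q)) ≤ C * dist (F^[n] p) (F^[n] q) := hFC _ _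
        _ ≤ C * (C ^ n * dist p q) := mul_le_mul_of_nonneg_left ih hC0
        _ = C ^ (n + 1) * dist p q := by ring
  have hsum : dist (∑ k ∈ Finset.range T, γ ^ k * r (F^[k] p))
      (∑ k ∈ Finset.range T, γ ^ k * r (F^[k] q))
      ≤ ∑ k ∈ Finset.range T, δ * (γ * C) ^ k * dist p q := by
    calc dist _ _ ≤ ∑ k ∈ Finset.range T,
          dist (γ ^ k * r (F^[k] p)) (γ ^ k * r (F^[k] q)) := dist_sum_sum_le _ _ _
      _ ≤ ∑ k ∈ Finset.range T, δ * (γ * C) ^ k * dist p q := by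
        apply Finset.sum_le_sum
        intro k _
        rw [Real.dist_eq, ← mul_sub, abs_mul, abs_pow, abs_of_nonneg hγ0, ← Real.dist_eq]
        calc γ ^ k * dist (r (F^[k] p)) (r (F^[k] q))
            ≤ γ ^ k * (δ * dist (F^[k] p) (F^[k] q)) :=
              mul_le_mul_of_nonneg_left (hr _ _) (pow_nonneg hγ0 k)
          _ ≤ γ ^ k * (δ * (C ^ k * dist p q)) :=
              mul_le_mul_of_nonneg_left
                (mul_le_mul_of_nonneg_left (hiter k) hδ) (pow_nonneg hγ0 k)
          _ = δ * (γ * C) ^ k * dist p q := by rw [mul_pow]; ring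
  refine hsum.trans (le_of_eq ?_)
  rw [← Finset.sum_mul, ← Finset.mul_sum, geom_sum_eq hne]
  have h1 : γ * C - 1 ≠ 0 := sub_ne_zero.mpr hne
  have h2 : 1 - γ * C ≠ 0 := sub_ne_zero.mpr (fun h => hne h.symm)
  field_simp
  ring
end

section
/- Let f : X × Y → X be A-Lipschitz, μ : X → Y be B-Lipschitz, and r : X × Y → ℝ be δ-Lipschitz and bounded (|r| ≤ R for some R). Let γ ∈ [0,1), C = A·max(1,B), and assume γ·C < 1. Then the infinite-horizon value Q(s,a) := Σ_{k=0}^{∞} γ^k r(F^[k](s,a)) is well defined (the series converges absolutely) and Q is Lipschitz with constant δ / (1 - γC). -/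
theorem stmt4 {X Y : Type*} [MetricSpace X] [MetricSpace Y]
    (A B δ γ R : ℝ) (hA : 0 ≤ A) (hB : 0 ≤ B) (hδ : 0 ≤ δ)
    (hγ0 : 0 ≤ γ) (hγ1 : γ < 1)
    (f : X × Y → X) (μ : X → Y) (r : X × Y → ℝ)
    (hf : ∀ p q : X × Y, dist (f p) (f q) ≤ A * dist p q)
    (hμ : ∀ s t : X, dist (μ s) (μ t) ≤ B * dist s t)
    (hr : ∀ p q : X × Y, dist (r p) (r q) ≤ δ * dist p q)
    (hbound : ∀ p : X × Y, |r p| ≤ R)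
    (F : X × Y → X × Y) (hF : ∀ p, F p = (f p, μ (f p)))
    (C : ℝ) (hC : C = A * max 1 B) (hγC : γ * C < 1) :
    (∀ p : X × Y, Summable fun k : ℕ => |γ ^ k * r (F^[k] p)|) ∧
    (∀ p q : X × Y,
      dist (∑' k : ℕ, γ ^ k * r (F^[k] p)) (∑' k : ℕ, γ ^ k * r (F^[k] q))
        ≤ (δ / (1 - γ * C)) * dist p q) := by
  have hC0 : 0 ≤ C := by
    rw [hC]; exact mul_nonneg hA (le_trans zero_le_one (le_max_left _ _))
  -- F is C-Lipschitz
  have hFlip : ∀ p q : X × Y, dist (F p) (F q) ≤ C * dist p q := by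
    intro p q
    rw [hF p, hF q, Prod.dist_eq]
    simp only
    rw [max_le_iff]
    constructor
    · calc dist (f p) (f q) ≤ A * dist p q := hf p q
        _ ≤ C * dist p q := by
          apply mul_le_mul_of_nonneg_right _ dist_nonneg
          rw [hC]
          nlinarith [le_max_left 1 B]
    · calc dist (μ (f p)) (μ (f q)) ≤ B * dist (f p) (f q) := hμ _ _
        _ ≤ B * (A * dist p q) := by
          exact mul_le_mul_of_nonneg_left (hf p q) hB
        _ = (B * A) * dist p q := by ring
        _ ≤ C * dist p q := by
          apply mul_le_mul_of_nonneg_right _ dist_nonneg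
          rw [hC, mul_comm B A]
          exact mul_le_mul_of_nonneg_left (le_max_right _ _) hA
  have hFk : ∀ (k : ℕ) (p q : X × Y), dist (F^[k] p) (F^[k] q) ≤ C ^ k * dist p q := by
    intro k
    induction k with
    | zero => intro p q; simp
    | succ n ih =>
        intro p q
        rw [Function.iterate_succ_apply', Function.iterate_succ_apply']
        calc dist (F (F^[n] p)) (F (F^[n] q)) ≤ C * dist (F^[n] p) (F^[n] q) := hFlip _ _
          _ ≤ C * (C ^ n * dist p q) := mul_le_mul_of_nonneg_left (ih p q) hC0
          _ = C ^ (n + 1) * dist p q := by ring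
  have hsum : ∀ p : X × Y, Summable fun k : ℕ => |γ ^ k * r (F^[k] p)| := by
    intro p
    apply Summable.of_nonneg_of_le (fun k => abs_nonneg _) (fun k => ?_)
      ((summable_geometric_of_lt_one hγ0 hγ1).mul_right (max R 0))
    rw [abs_mul, abs_pow, abs_of_nonneg hγ0, mul_comm _ (max R 0), mul_comm (γ ^ k)]
    exact mul_le_mul_of_nonneg_right (le_trans (hbound _) (le_max_left _ _)) (pow_nonneg hγ0 k)
  refine ⟨hsum, fun p q => ?_⟩
  have hγC0 : 0 ≤ γ * C := mul_nonneg hγ0 hC0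
  have hgeo : Summable fun k : ℕ => (γ * C) ^ k :=
    summable_geometric_of_lt_one hγC0 hγC
  have hsp := (hsum p).of_abs
  have hsq := (hsum q).of_abs
  rw [Real.dist_eq, ← Summable.tsum_sub hsp hsq]
  have hterm : ∀ k : ℕ,
        |γ ^ k * r (F^[k] p) - γ ^ k * r (F^[k] q)| ≤ (γ * C) ^ k * (δ * dist p q) := by
      intro k
      rw [← mul_sub, abs_mul, abs_pow, abs_of_nonneg hγ0, ← Real.dist_eq, mul_pow]
      calc γ ^ k * dist (r (F^[k] p)) (r (F^[k] q))
          ≤ γ ^ k * (δ * (C ^ k * dist p q)) := by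
            apply mul_le_mul_of_nonneg_left _ (pow_nonneg hγ0 k)
            exact le_trans (hr _ _) (mul_le_mul_of_nonneg_left (hFk k p q) hδ)
        _ = γ ^ k * C ^ k * (δ * dist p q) := by ring
  calc |∑' k : ℕ, (γ ^ k * r (F^[k] p) - γ ^ k * r (F^[k] q))|
      ≤ ∑' k : ℕ, (γ * C) ^ k * (δ * dist p q) := by
        have h := tsum_of_norm_bounded
            (f := fun k : ℕ => γ ^ k * r (F^[k] p) - γ ^ k * r (F^[k] q))
            ((hgeo.mul_right (δ * dist p q)).hasSum)
            (fun k => by simpa [Real.norm_eq_abs] using hterm k)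
        simpa [Real.norm_eq_abs] using h
    _ = (1 - γ * C)⁻¹ * (δ * dist p q) := by
        rw [tsum_mul_right, tsum_geometric_of_lt_one hγC0 hγC]
    _ = δ / (1 - γ * C) * dist p q := by ring
end

section
/- Let f : X × Y → X be A-Lipschitz, μ : X → Y be B-Lipschitz, r : X × Y → ℝ be δ-Lipschitz, F(s,a) = (f(s,a), μ(f(s,a))), C = A·max(1,B), γ ∈ [0,1), and let (κ_k)_{k∈ℕ} be a sequence of reals with 0 < κ_k ≤ κ ≤ 1 for all k. If γC ≠ 1, then the preconditioned finite-horizon value Q̃_T(s,a) := Σ_{k=0}^{T-1} γ^k κ_k r(F^[k](s,a)) is Lipschitz with constant κ · δ · (1 - (γC)^T)/(1 - γC). -/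
theorem stmt6 {X Y : Type*} [MetricSpace X] [MetricSpace Y]
    (A B δ γ : ℝ) (hA : 0 ≤ A) (hB : 0 ≤ B) (hδ : 0 ≤ δ)
    (hγ0 : 0 ≤ γ) (hγ1 : γ < 1)
    (f : X × Y → X) (μ : X → Y) (r : X × Y → ℝ)
    (hf : ∀ p q : X × Y, dist (f p) (f q) ≤ A * dist p q)
    (hμ : ∀ s t : X, dist (μ s) (μ t) ≤ B * dist s t)
    (hr : ∀ p q : X × Y, dist (r p) (r q) ≤ δ * dist p q)
    (F : X × Y → X × Y) (hF : ∀ p, F p = (f p, μ (f p)))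
    (C : ℝ) (hC : C = A * max 1 B) (hne : γ * C ≠ 1)
    (κseq : ℕ → ℝ) (κ : ℝ)
    (hκ : ∀ k, 0 < κseq k ∧ κseq k ≤ κ) (hκ1 : κ ≤ 1) (T : ℕ) :
    ∀ p q : X × Y,
      dist (∑ k ∈ Finset.range T, γ ^ k * κseq k * r (F^[k] p))
           (∑ k ∈ Finset.range T, γ ^ k * κseq k * r (F^[k] q))
        ≤ (κ * δ * (1 - (γ * C) ^ T) / (1 - γ * C)) * dist p q := by
  intro p q
  have hC0 : 0 ≤ C := by
    rw [hC]; positivity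
  have hκ0 : 0 ≤ κ := le_trans (hκ 0).1.le (hκ 0).2
  -- F is C-Lipschitz
  have hFlip : ∀ a b : X × Y, dist (F a) (F b) ≤ C * dist a b := by
    intro a b
    rw [hF a, hF b, Prod.dist_eq]
    have h1 : dist (f a) (f b) ≤ C * dist a b := by
      calc dist (f a) (f b) ≤ A * dist a b := hf a b
        _ ≤ C * dist a b := by
            apply mul_le_mul_of_nonneg_right _ dist_nonneg
            rw [hC]
            nlinarith [le_max_left 1 B]
    have h2 : dist (μ (f a)) (μ (f b)) ≤ C * dist a b := by
      calc dist (μ (f a)) (μ (f b)) ≤ B * dist (f a) (f b) := hμ _ _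
        _ ≤ B * (A * dist a b) := by
            exact mul_le_mul_of_nonneg_left (hf a b) hB
        _ = A * B * dist a b := by ring
        _ ≤ C * dist a b := by
            rw [hC]
            exact mul_le_mul_of_nonneg_right
              (mul_le_mul_of_nonneg_left (le_max_right 1 B) hA) dist_nonneg
    exact max_le h1 h2
  have hiter : ∀ k : ℕ, dist (F^[k] p) (F^[k] q) ≤ C ^ k * dist p q := by
    intro k
    induction k with
    | zero => simp
    | succ n ih =>
      rw [Function.iterate_succ_apply', Function.iterate_succ_apply']
      calc dist (F (F^[n] p)) (F (F^[n] q)) ≤ C * dist (F^[n] p) (F^[n] q) :=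
            hFlip _ _
        _ ≤ C * (C ^ n * dist p q) := mul_le_mul_of_nonneg_left ih hC0
        _ = C ^ (n + 1) * dist p q := by ring
  calc dist (∑ k ∈ Finset.range T, γ ^ k * κseq k * r (F^[k] p))
           (∑ k ∈ Finset.range T, γ ^ k * κseq k * r (F^[k] q))
      ≤ ∑ k ∈ Finset.range T,
          dist (γ ^ k * κseq k * r (F^[k] p)) (γ ^ k * κseq k * r (F^[k] q)) :=
        dist_sum_sum_le _ _ _
    _ ≤ ∑ k ∈ Finset.range T, κ * δ * (γ * C) ^ k * dist p q := by
        apply Finset.sum_le_sum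
        intro k _
        have hκk := hκ k
        have habs : dist (γ ^ k * κseq k * r (F^[k] p)) (γ ^ k * κseq k * r (F^[k] q))
            = γ ^ k * κseq k * dist (r (F^[k] p)) (r (F^[k] q)) := by
          rw [Real.dist_eq, Real.dist_eq, ← mul_sub, abs_mul,
            abs_of_nonneg (mul_nonneg (pow_nonneg hγ0 k) hκk.1.le)]
        rw [habs]
        calc γ ^ k * κseq k * dist (r (F^[k] p)) (r (F^[k] q))
            ≤ γ ^ k * κseq k * (δ * (C ^ k * dist p q)) := by
              apply mul_le_mul_of_nonneg_left _ (mul_nonneg (pow_nonneg hγ0 k) hκk.1.le)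
              calc dist (r (F^[k] p)) (r (F^[k] q)) ≤ δ * dist (F^[k] p) (F^[k] q) :=
                    hr _ _
                _ ≤ δ * (C ^ k * dist p q) :=
                    mul_le_mul_of_nonneg_left (hiter k) hδ
          _ ≤ κ * δ * (γ * C) ^ k * dist p q := by
              rw [mul_pow]
              nlinarith [pow_nonneg hγ0 k, pow_nonneg hC0 k, dist_nonneg (x := p) (y := q),
                mul_nonneg hδ (mul_nonneg (mul_nonneg (pow_nonneg hγ0 k) (pow_nonneg hC0 k)) (dist_nonneg (x := p) (y := q)))]
    _ = (κ * δ * (1 - (γ * C) ^ T) / (1 - γ * C)) * dist p q := by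
        rw [← Finset.sum_mul]
        congr 1
        rw [← Finset.mul_sum, geom_sum_eq hne]
        have h1 : (1 : ℝ) - γ * C ≠ 0 := sub_ne_zero.mpr (Ne.symm hne)
        have h2 : γ * C - 1 ≠ 0 := sub_ne_zero.mpr hne
        field_simp
        ring
end
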